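/- Let N ≥ 1, let S₁, S₂, S₃ be N×N complex matrices, and define Δ_N(P) = ∑_{α=1}^{3} [S_α, [S_α, P]]. Let ħ ≠ 0 and ν be real numbers. Suppose W, P : ℝ → M_N(ℂ) are differentiable, satisfy Δ_N(P(t)) = −W(t) for all t, and obey the hyperviscous Euler–Zeitlin equation dW/dt = −(1/ħ)[W(t), P(t)] + (ν/ħ²)[P(t), [P(t), W(t)]]. Then the energy t ↦ tr(P(t)·W(t)) is constant in t. -/

import Mathlib

open Matrix

/-- The quantized (Hoppe–Yau) Laplacian built from three fixed matrices `S 0, S 1, S 2`: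
`Δ_N P = ∑_{α} [S_α, [S_α, P]]` with `[A, B] = A * B - B * A`. -/
noncomputable def hoppeYauLaplacian {N : ℕ} (S : Fin 3 → Matrix (Fin N) (Fin N) ℂ)
    (P : Matrix (Fin N) (Fin N) ℂ) : Matrix (Fin N) (Fin N) ℂ :=
  ∑ α : Fin 3, (S α * (S α * P - P * S α) - (S α * P - P * S α) * S α)

lemma trace_rot4 {N : ℕ} (a b c d : Matrix (Fin N) (Fin N) ℂ) :
    trace (a*(b*(c*d))) = trace (b*(c*(d*a))) := by
  rw [trace_mul_comm, mul_assoc, mul_assoc]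

/-- The Hoppe–Yau Laplacian as a linear map. -/
noncomputable def lapLM {N : ℕ} (S : Fin 3 → Matrix (Fin N) (Fin N) ℂ) :
    Matrix (Fin N) (Fin N) ℂ →ₗ[ℂ] Matrix (Fin N) (Fin N) ℂ where
  toFun := hoppeYauLaplacian S
  map_add' x y := by
    simp only [hoppeYauLaplacian, ← Finset.sum_add_distrib]
    exact Finset.sum_congr rfl fun α _ => by noncomm_ring
  map_smul' c x := by
    simp only [hoppeYauLaplacian, RingHom.id_apply, Finset.smul_sum]
    exact Finset.sum_congr rfl fun α _ => by
      simp only [← smul_sub, mul_smul_comm, smul_mul_assoc]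

/-- Self-adjointness of the Laplacian w.r.t. the trace bilinear form. -/
lemma lap_selfadjoint {N : ℕ} (S : Fin 3 → Matrix (Fin N) (Fin N) ℂ)
    (A B : Matrix (Fin N) (Fin N) ℂ) :
    trace (A * lapLM S B) = trace (lapLM S A * B) := by
  show trace (A * hoppeYauLaplacian S B) = trace (hoppeYauLaplacian S A * B)
  simp only [hoppeYauLaplacian, Finset.mul_sum, Finset.sum_mul, trace_sum]
  refine Finset.sum_congr rfl fun α _ => ?_
  set s := S α
  simp only [mul_sub, sub_mul, trace_sub, mul_assoc]
  linear_combination -(trace_rot4 s s A B) - (trace_rot4 s A B s) + 2 * (trace_rot4 s A s B)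

/-- The `(i,j)` entry as a linear functional. -/
def entryLM {N : ℕ} (i j : Fin N) : Matrix (Fin N) (Fin N) ℂ →ₗ[ℂ] ℂ where
  toFun M := M i j
  map_add' _ _ := rfl
  map_smul' _ _ := rfl

lemma functional_eq_sum {N : ℕ} (φ : Matrix (Fin N) (Fin N) ℂ →ₗ[ℂ] ℂ)
    (M : Matrix (Fin N) (Fin N) ℂ) :
    φ M = ∑ i, ∑ j, M i j * φ (Matrix.single i j 1) := by
  conv_lhs => rw [matrix_eq_sum_single M]
  rw [map_sum]
  refine Finset.sum_congr rfl fun i _ => ?_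
  rw [map_sum]
  refine Finset.sum_congr rfl fun j _ => ?_
  rw [show Matrix.single i j (M i j) = (M i j) • Matrix.single i j 1 by
    rw [Matrix.smul_single, smul_eq_mul, mul_one], _root_.map_smul, smul_eq_mul]

/-- Composing a curve with a linear functional preserves differentiability
(given entrywise differentiability of the curve). -/
lemma hasDerivAt_functional {N : ℕ} (φ : Matrix (Fin N) (Fin N) ℂ →ₗ[ℂ] ℂ)
    (W : ℝ → Matrix (Fin N) (Fin N) ℂ) (D : Matrix (Fin N) (Fin N) ℂ) (t : ℝ)
    (h : ∀ i j, HasDerivAt (fun s => W s i j) (D i j) t) :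
    HasDerivAt (fun s => φ (W s)) (φ D) t := by
  have hfe : (fun s => φ (W s)) = fun s => ∑ i, ∑ j, W s i j * φ (Matrix.single i j 1) := by
    funext s; exact functional_eq_sum φ (W s)
  rw [hfe, functional_eq_sum φ D]
  exact HasDerivAt.fun_sum fun i _ => HasDerivAt.fun_sum fun j _ => (h i j).mul_const _

lemma trace_mul_expand {N : ℕ} (A B : Matrix (Fin N) (Fin N) ℂ) :
    trace (A * B) = ∑ i, ∑ j, A i j * B j i := by
  simp [Matrix.trace, Matrix.mul_apply, Matrix.diag]

theorem energy_conserved_hyperviscous_euler_zeitlin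
    {N : ℕ} (hN : 1 ≤ N) (S : Fin 3 → Matrix (Fin N) (Fin N) ℂ)
    (hbar ν : ℝ) (hbar_ne : hbar ≠ 0)
    (W P : ℝ → Matrix (Fin N) (Fin N) ℂ)
    (hPoisson : ∀ t : ℝ, hoppeYauLaplacian S (P t) = -W t)
    (hW : ∀ (t : ℝ) (i j : Fin N),
      HasDerivAt (fun s => W s i j)
        ((-(1 / hbar) • (W t * P t - P t * W t)
          + (ν / hbar ^ 2) • (P t * (P t * W t - W t * P t) - (P t * W t - W t * P t) * P t)) i j) t) :
    ∀ s t : ℝ, Matrix.trace (P s * W s) = Matrix.trace (P t * W t) := by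
  classical
  set Δ := lapLM S with hΔdef
  have hΔP : ∀ u, Δ (P u) = -W u := fun u => hPoisson u
  set D : ℝ → Matrix (Fin N) (Fin N) ℂ := fun t =>
    -(1 / hbar) • (W t * P t - P t * W t)
      + (ν / hbar ^ 2) • (P t * (P t * W t - W t * P t) - (P t * W t - W t * P t) * P t)
    with hDdef
  have hWd : ∀ (τ : ℝ) (i j : Fin N), HasDerivAt (fun s => W s i j) (D τ i j) τ :=
    fun τ i j => hW τ i j
  have hWmem : ∀ u, W u ∈ LinearMap.range Δ := fun u =>
    ⟨-(P u), by rw [map_neg, hΔP, neg_neg]⟩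
  have hsa : ∀ A B, trace (A * Δ B) = trace (Δ A * B) := lap_selfadjoint S
  -- a linear "inverse" of Δ on its range
  obtain ⟨g, hg⟩ := LinearMap.exists_rightInverse_of_surjective Δ.rangeRestrict
    Δ.range_rangeRestrict
  obtain ⟨π, hπ⟩ := (LinearMap.range Δ).subtype.exists_leftInverse_of_injective
    (Submodule.ker_subtype _)
  set G : Matrix (Fin N) (Fin N) ℂ →ₗ[ℂ] Matrix (Fin N) (Fin N) ℂ := g ∘ₗ π with hGdef
  have hG : ∀ v, v ∈ LinearMap.range Δ → Δ (G v) = v := by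
    intro v hv
    have h1 : π v = ⟨v, hv⟩ := by
      have := LinearMap.congr_fun hπ ⟨v, hv⟩
      simpa using this
    have h2 : Δ.rangeRestrict (g ⟨v, hv⟩) = ⟨v, hv⟩ := LinearMap.congr_fun hg ⟨v, hv⟩
    have h3 : Δ (g ⟨v, hv⟩) = v := congrArg Subtype.val h2
    simp only [hGdef, LinearMap.coe_comp, Function.comp_apply, h1]
    exact h3
  have hker_trace : ∀ K, Δ K = 0 → ∀ X, X ∈ LinearMap.range Δ → trace (K * X) = 0 := by
    rintro K hK X ⟨Y, rfl⟩
    rw [hsa, hK, zero_mul, trace_zero]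
  have hGW : ∀ u, Δ (G (W u)) = W u := fun u => hG _ (hWmem u)
  have hKmem : ∀ u, Δ (P u + G (W u)) = 0 := fun u => by
    rw [map_add, hGW, hΔP, neg_add_cancel]
  -- the energy equals a function of W alone
  have hE : ∀ u, trace (P u * W u) = -trace (G (W u) * W u) := by
    intro u
    have h0 : trace ((P u + G (W u)) * W u) = 0 := hker_trace _ (hKmem u) _ (hWmem u)
    rw [add_mul, trace_add] at h0
    linear_combination h0
  -- the derivative stays in the range of Δ
  have hDmem : ∀ τ, D τ ∈ LinearMap.range Δ := by
    intro τ
    by_contra hx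
    obtain ⟨φ, hφ0, hφmap⟩ :=
      Submodule.exists_dual_map_eq_bot_of_notMem hx inferInstance
    have hval : ∀ u, φ (W u) = 0 := by
      intro u
      have hm : φ (W u) ∈ Submodule.map φ (LinearMap.range Δ) :=
        Submodule.mem_map_of_mem (hWmem u)
      rw [hφmap] at hm
      simpa using hm
    have hd := hasDerivAt_functional φ W (D τ) τ (fun i j => hWd τ i j)
    rw [funext hval] at hd
    exact hφ0 (hd.unique (hasDerivAt_const τ 0))
  -- tr(P * D) = 0
  have hPD : ∀ τ, trace (P τ * D τ) = 0 := by
    intro τ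
    have e1 : trace (P τ * (W τ * P τ - P τ * W τ)) = 0 := by
      rw [mul_sub, trace_sub, ← mul_assoc, ← mul_assoc, trace_mul_cycle, sub_self]
    have e2 : trace (P τ * (P τ * (P τ * W τ - W τ * P τ) - (P τ * W τ - W τ * P τ) * P τ)) = 0 := by
      rw [mul_sub, trace_sub, ← mul_assoc, ← mul_assoc,
        show trace (P τ * (P τ * W τ - W τ * P τ) * P τ)
          = trace (P τ * P τ * (P τ * W τ - W τ * P τ)) from trace_mul_cycle _ _ _, sub_self]
    rw [hDdef]
    simp only [mul_add, Matrix.mul_smul, trace_add, trace_smul, e1, e2, smul_zero, add_zero]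
  have hGWD : ∀ τ, trace (G (W τ) * D τ) = 0 := by
    intro τ
    have h1 : trace ((P τ + G (W τ)) * D τ) = 0 := hker_trace _ (hKmem τ) _ (hDmem τ)
    rw [add_mul, trace_add, hPD τ, zero_add] at h1
    exact h1
  have hGDW : ∀ τ, trace (G (D τ) * W τ) = 0 := by
    intro τ
    calc trace (G (D τ) * W τ) = trace (G (D τ) * Δ (G (W τ))) := by rw [hGW]
      _ = trace (Δ (G (D τ)) * G (W τ)) := hsa _ _
      _ = trace (D τ * G (W τ)) := by rw [hG _ (hDmem τ)]
      _ = trace (G (W τ) * D τ) := trace_mul_comm _ _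
      _ = 0 := hGWD τ
  -- the reduced energy has zero derivative
  set F : ℝ → ℂ := fun u => -trace (G (W u) * W u) with hFdef
  have hFderiv : ∀ τ, HasDerivAt F 0 τ := by
    intro τ
    have hterm : ∀ i j : Fin N, HasDerivAt (fun u => (G (W u)) i j * (W u) j i)
        ((G (D τ)) i j * (W τ) j i + (G (W τ)) i j * (D τ) j i) τ := by
      intro i j
      have h1 : HasDerivAt (fun u => (G (W u)) i j) ((G (D τ)) i j) τ :=
        hasDerivAt_functional ((entryLM i j).comp G) W (D τ) τ (fun i j => hWd τ i j)
      exact h1.mul (hWd τ j i)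
    have hsum : HasDerivAt (fun u => ∑ i, ∑ j, (G (W u)) i j * (W u) j i)
        (∑ i, ∑ j, ((G (D τ)) i j * (W τ) j i + (G (W τ)) i j * (D τ) j i)) τ :=
      HasDerivAt.fun_sum fun i _ => HasDerivAt.fun_sum fun j _ => hterm i j
    have hval : (∑ i, ∑ j, ((G (D τ)) i j * (W τ) j i + (G (W τ)) i j * (D τ) j i))
        = trace (G (D τ) * W τ) + trace (G (W τ) * D τ) := by
      rw [trace_mul_expand, trace_mul_expand, ← Finset.sum_add_distrib]
      exact Finset.sum_congr rfl fun i _ => Finset.sum_add_distrib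
    have hFeq : F = fun u => -(∑ i, ∑ j, (G (W u)) i j * (W u) j i) := by
      funext u
      rw [hFdef]
      simp only [trace_mul_expand]
    rw [hFeq]
    have hfin := hsum.neg
    rw [hval, hGDW τ, hGWD τ, add_zero, neg_zero] at hfin
    exact hfin
  have hconst : ∀ a b : ℝ, F a = F b := fun a b =>
    is_const_of_deriv_eq_zero (fun x => (hFderiv x).differentiableAt)
      (fun x => (hFderiv x).deriv) a b
  intro s t
  rw [hE s, hE t]
  exact hconst s t
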